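/- arXiv:1909.13600 — 2 statements merged into one kernel-verified Lean document; each statement's English description precedes it below -/
import Mathlib

section
/- (Case of Lemma 3: overflow on both sides.) Let Δ ≥ 0 and let L, U, ℓ ∈ ℝ with L < ℓ − Δ and ℓ + Δ < U. Then the symbolic loss, which in this case is the sum of the distances from the midpoints of the two overflowing intervals [L, ℓ − Δ] and [ℓ + Δ, U] to the tolerance interval, satisfies infDist((L + (ℓ − Δ))/2, Icc(ℓ − Δ, ℓ + Δ)) + infDist(((ℓ + Δ) + U)/2, Icc(ℓ − Δ, ℓ + Δ)) = (1/2)·(e_Δ(L, ℓ) + e_Δ(U, ℓ)). -/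
/-- Tolerance error between a prediction `p` and a label `ℓ` with tolerance `Δ`:
`0` if `|p - ℓ| ≤ Δ`, otherwise the minimum of the distances to the shifted labels. -/
noncomputable def tolErr (Δ p ℓ : ℝ) : ℝ :=
  if |p - ℓ| ≤ Δ then 0 else min |p - (ℓ - Δ)| |p - (ℓ + Δ)|

lemma infDist_Icc_left (x a b : ℝ) (hx : x ≤ a) (hab : a ≤ b) :
    Metric.infDist x (Set.Icc a b) = a - x := by
  refine le_antisymm ?_ ?_
  · have := Metric.infDist_le_dist_of_mem (x := x) (y := a)
      (Set.mem_Icc.2 ⟨le_refl a, hab⟩)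
    rw [Real.dist_eq, abs_of_nonpos (by linarith)] at this
    linarith
  · haveI : Nonempty ↥(Set.Icc a b) := ⟨⟨a, Set.mem_Icc.2 ⟨le_rfl, hab⟩⟩⟩
    rw [Metric.infDist_eq_iInf]
    refine le_ciInf fun ⟨y, hy⟩ => ?_
    obtain ⟨h3, h4⟩ := Set.mem_Icc.1 hy
    rw [Real.dist_eq, abs_of_nonpos (by linarith)]
    linarith

lemma infDist_Icc_right (x a b : ℝ) (hx : b ≤ x) (hab : a ≤ b) :
    Metric.infDist x (Set.Icc a b) = x - b := by
  refine le_antisymm ?_ ?_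
  · have := Metric.infDist_le_dist_of_mem (x := x) (y := b)
      (Set.mem_Icc.2 ⟨hab, le_refl b⟩)
    rwa [Real.dist_eq, abs_of_nonneg (by linarith)] at this
  · haveI : Nonempty ↥(Set.Icc a b) := ⟨⟨a, Set.mem_Icc.2 ⟨le_rfl, hab⟩⟩⟩
    rw [Metric.infDist_eq_iInf]
    refine le_ciInf fun ⟨y, hy⟩ => ?_
    obtain ⟨h3, h4⟩ := Set.mem_Icc.1 hy
    rw [Real.dist_eq, abs_of_nonneg (by linarith)]
    linarith

/-- Lemma 3, case: overflow on both sides. -/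
theorem symbolic_loss_case_both_overflow (Δ L U ℓ : ℝ) (hΔ : 0 ≤ Δ)
    (h1 : L < ℓ - Δ) (h2 : ℓ + Δ < U) :
    Metric.infDist ((L + (ℓ - Δ)) / 2) (Set.Icc (ℓ - Δ) (ℓ + Δ)) +
        Metric.infDist (((ℓ + Δ) + U) / 2) (Set.Icc (ℓ - Δ) (ℓ + Δ)) =
      (1 / 2) * (tolErr Δ L ℓ + tolErr Δ U ℓ) := by
  have hab : ℓ - Δ ≤ ℓ + Δ := by linarith
  rw [infDist_Icc_left _ _ _ (by linarith) hab,
      infDist_Icc_right _ _ _ (by linarith) hab]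
  have hL : tolErr Δ L ℓ = (ℓ - Δ) - L := by
    rw [tolErr, if_neg (by rw [abs_le]; push_neg; intro; linarith)]
    rw [abs_of_nonpos (by linarith), abs_of_nonpos (by linarith)]
    rw [min_eq_left (by linarith)]; ring
  have hU : tolErr Δ U ℓ = U - (ℓ + Δ) := by
    rw [tolErr, if_neg (by rw [abs_le]; push_neg; intro; linarith)]
    rw [abs_of_nonneg (by linarith), abs_of_nonneg (by linarith)]
    rw [min_eq_right (by linarith)]
  rw [hL, hU]; ring
end

section
/- (Lemma 5, dataset version.) Let h : (Fin m → ℝ) → (Fin d → ℝ) be any function, κ ≥ 0, and Δ : Fin d → ℝ with Δ j ≥ 0 for all j. Let a training set be given by features fv : Fin N → (Fin m → ℝ) and labels ℓ : Fin N → (Fin d → ℝ) with N > 0, together with output bounds L, U : Fin N → (Fin d → ℝ) satisfying the soundness condition: for every i and every v : Fin m → ℝ with |v k − fv i k| ≤ κ for all k, one has L i j ≤ h(v) j ≤ U i j for all j. If the symbolic tolerance loss vanishes, i.e. (1/N) · Σ_{i} Σ_{j} ((1/2)·(e_{Δ j}(L i j, ℓ i j) + e_{Δ j}(U i j, ℓ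 i j)))² = 0, then for every input fv' : Fin m → ℝ for which there exists i with |fv' k − fv i k| ≤ κ for all k, the output satisfies ℓ i j − Δ j ≤ h(fv') j ≤ ℓ i j + Δ j for all j. -/
lemma tolErr_nonneg (Δ p ℓ : ℝ) : 0 ≤ tolErr Δ p ℓ := by
  unfold tolErr
  split
  · exact le_refl 0
  · exact le_min (abs_nonneg _) (abs_nonneg _)

lemma tolErr_eq_zero {Δ p ℓ : ℝ} (hΔ : 0 ≤ Δ) (h : tolErr Δ p ℓ = 0) : |p - ℓ| ≤ Δ := by
  unfold tolErr at h
  by_cases hc : |p - ℓ| ≤ Δ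
  · exact hc
  · simp only [hc, if_false] at h
    rcases min_eq_iff.mp h with h1 | h1 <;>
    · have := abs_eq_zero.mp h1.1
      have hpe : |p - ℓ| = Δ := by
        rw [abs_eq hΔ]; first | (left; linarith) | (right; linarith)
      exact hpe.le

/-- Lemma 5 (dataset version): if the symbolic tolerance loss on the training set is zero,
then any input whose feature vector is `κ`-close to a training feature vector produces
output within the tolerance of the corresponding label. -/
theorem provable_robustness_dataset (m d N : ℕ) (hN : 0 < N)
    (h : (Fin m → ℝ) → (Fin d → ℝ)) (κ : ℝ) (hκ : 0 ≤ κ)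
    (Δ : Fin d → ℝ) (hΔ : ∀ j, 0 ≤ Δ j)
    (fv : Fin N → (Fin m → ℝ)) (ℓ : Fin N → (Fin d → ℝ))
    (L U : Fin N → (Fin d → ℝ))
    (hsound : ∀ i, ∀ v : Fin m → ℝ, (∀ k, |v k - fv i k| ≤ κ) →
      ∀ j, L i j ≤ h v j ∧ h v j ≤ U i j)
    (hloss : (1 / (N : ℝ)) * ∑ i : Fin N, ∑ j : Fin d,
      ((1 / 2) * (tolErr (Δ j) (L i j) (ℓ i j) + tolErr (Δ j) (U i j) (ℓ i j))) ^ 2 = 0) :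
    ∀ fv' : Fin m → ℝ, ∀ i : Fin N, (∀ k, |fv' k - fv i k| ≤ κ) →
      ∀ j, ℓ i j - Δ j ≤ h fv' j ∧ h fv' j ≤ ℓ i j + Δ j := by
  intro fv' i hclose j
  have hNne : (1 / (N : ℝ)) ≠ 0 := by positivity
  have hsum : ∑ i : Fin N, ∑ j : Fin d,
      ((1 / 2) * (tolErr (Δ j) (L i j) (ℓ i j) + tolErr (Δ j) (U i j) (ℓ i j))) ^ 2 = 0 := by
    have := mul_eq_zero.mp hloss
    rcases this with h0 | h0
    · exact absurd h0 hNne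
    · exact h0
  have hterm : ((1 / 2) * (tolErr (Δ j) (L i j) (ℓ i j) + tolErr (Δ j) (U i j) (ℓ i j))) ^ 2 = 0 := by
    have h1 : ∀ i : Fin N, ∀ j : Fin d,
        0 ≤ ((1 / 2) * (tolErr (Δ j) (L i j) (ℓ i j) + tolErr (Δ j) (U i j) (ℓ i j))) ^ 2 :=
      fun _ _ => sq_nonneg _
    have := (Finset.sum_eq_zero_iff_of_nonneg (fun i _ =>
      Finset.sum_nonneg (fun j _ => h1 i j))).mp hsum i (Finset.mem_univ i)
    exact (Finset.sum_eq_zero_iff_of_nonneg (fun j _ => h1 i j)).mp this j (Finset.mem_univ j)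
  have hsum0 : tolErr (Δ j) (L i j) (ℓ i j) + tolErr (Δ j) (U i j) (ℓ i j) = 0 := by
    have := pow_eq_zero_iff (n := 2) (by norm_num) |>.mp hterm
    linarith
  have hL0 : tolErr (Δ j) (L i j) (ℓ i j) = 0 :=
    le_antisymm (by have := tolErr_nonneg (Δ j) (U i j) (ℓ i j); linarith) (tolErr_nonneg _ _ _)
  have hU0 : tolErr (Δ j) (U i j) (ℓ i j) = 0 :=
    le_antisymm (by have := tolErr_nonneg (Δ j) (L i j) (ℓ i j); linarith) (tolErr_nonneg _ _ _)
  have hLb := abs_le.mp (tolErr_eq_zero (hΔ j) hL0)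
  have hUb := abs_le.mp (tolErr_eq_zero (hΔ j) hU0)
  obtain ⟨hl, hu⟩ := hsound i fv' hclose j
  constructor <;> linarith
end
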